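/- Let A be a commutative ring, Φ a formal group law over A, and let the product group G = G₁ × G₂ act on Φ; in particular G₁ and G₂ act on Φ (via the inclusions) and the corresponding automorphisms commute: σ₁∘σ₂ = σ₂∘σ₁ for all σ₁ ∈ G₁, σ₂ ∈ G₂. Let (F₁, f₁) be a universal fixed pair for (Φ, G₁), and let G₂ act on F₁ by the induced action, namely for each σ₂ ∈ G₂ let σ'₂ be the unique automorphism of F₁ with f₁∘σ'₂ = σ₂∘f₁ (it exists and is unique by universality of (F₁,f₁), since σ₂∘f₁ is again fixed under G₁). If (F₂, f₂) is a universal fixed pair for (F₁, G₂) with respect to this induced action, then (F₂, f₁∘f₂) is a universal fixed pair for (Φ, G). -/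

import Mathlib

set_option linter.unusedSectionVars false

open MvPowerSeries

/-- Substitution of a family of power series into a multivariate power series,
defined coefficientwise (meaningful when each substituted series has zero constant term). -/
noncomputable def msubst {σ τ R : Type*} [Fintype σ] [DecidableEq σ] [CommRing R]
    (a : σ → MvPowerSeries τ R) (f : MvPowerSeries σ R) : MvPowerSeries τ R :=
  fun e => ∑ d ∈ Finset.Iic (Finsupp.equivFunOnFinite.symm (fun _ : σ => e.sum fun _ n => n)),
    MvPowerSeries.coeff d f * MvPowerSeries.coeff e (∏ s : σ, a s ^ d s)

namespace MAux

open Finsupp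

lemma deg_sum_eq {α : Type*} (e : α →₀ ℕ) : (e.sum fun _ n => n) = degree e := rfl

lemma degree_add {α : Type*} (u v : α →₀ ℕ) : degree (u + v) = degree u + degree v := by
  classical
  simp only [← deg_sum_eq]
  exact Finsupp.sum_add_index' (fun _ => rfl) (fun _ _ _ => rfl)

lemma degree_mono {α : Type*} {u v : α →₀ ℕ} (h : u ≤ v) : degree u ≤ degree v := by
  obtain ⟨c, rfl⟩ := le_iff_exists_add.mp h
  rw [degree_add]; omega

variable {σ τ R : Type*} [Fintype σ] [DecidableEq σ] [CommRing R]

lemma coeff_msubst (a : σ → MvPowerSeries τ R) (f : MvPowerSeries σ R) (e : τ →₀ ℕ) :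
    MvPowerSeries.coeff e (msubst a f) =
    ∑ d ∈ Finset.Iic (Finsupp.equivFunOnFinite.symm (fun _ : σ => degree e)),
      MvPowerSeries.coeff d f * MvPowerSeries.coeff e (∏ s : σ, a s ^ d s) := rfl

/-- order predicate: all coefficients of degree < n vanish -/
def OrdGE (f : MvPowerSeries τ R) (n : ℕ) : Prop :=
  ∀ e : τ →₀ ℕ, degree e < n → MvPowerSeries.coeff e f = 0

lemma ordGE_mul [DecidableEq τ] {f g : MvPowerSeries τ R} {m n : ℕ}
    (hf : OrdGE f m) (hg : OrdGE g n) : OrdGE (f * g) (m + n) := by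
  intro e he
  rw [MvPowerSeries.coeff_mul]
  refine Finset.sum_eq_zero fun p hp => ?_
  rw [Finset.HasAntidiagonal.mem_antidiagonal] at hp
  have : degree p.1 + degree p.2 = degree e := by rw [← degree_add, hp]
  rcases lt_or_ge (degree p.1) m with h | h
  · rw [hf _ h, zero_mul]
  · rw [hg _ (by omega), mul_zero]

lemma ordGE_one_of_const [DecidableEq τ] {f : MvPowerSeries τ R}
    (h : MvPowerSeries.constantCoeff f = 0) : OrdGE f 1 := by
  intro e he
  have : e = 0 := (degree_eq_zero_iff e).mp (by omega)
  subst this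
  exact h

lemma ordGE_pow [DecidableEq τ] {f : MvPowerSeries τ R}
    (h : MvPowerSeries.constantCoeff f = 0) (k : ℕ) : OrdGE (f ^ k) k := by
  induction k with
  | zero => exact fun e he => absurd he (by omega)
  | succ k ih =>
    rw [pow_succ]
    exact ordGE_mul ih (ordGE_one_of_const h)

lemma ordGE_prod [DecidableEq τ] (a : σ → MvPowerSeries τ R)
    (ha : ∀ s, MvPowerSeries.constantCoeff (a s) = 0) (d : σ →₀ ℕ) :
    OrdGE (∏ s : σ, a s ^ d s) (∑ s : σ, d s) := by
  classical
  have H : ∀ t : Finset σ, OrdGE (∏ s ∈ t, a s ^ d s) (∑ s ∈ t, d s) := by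
    intro t
    induction t using Finset.induction with
    | empty => intro e he; simp at he
    | @insert s t hs ih =>
      rw [Finset.prod_insert hs, Finset.sum_insert hs]
      exact ordGE_mul (ordGE_pow (ha s) (d s)) ih
  exact H Finset.univ


lemma degree_eq_sum_univ (d : σ →₀ ℕ) : degree d = ∑ s : σ, d s := by
  rw [degree]
  exact Finset.sum_subset (Finset.subset_univ _) (fun s _ hs => Finsupp.notMem_support_iff.mp hs)

/-- all members of the family have zero constant coefficient -/
def Z (a : σ → MvPowerSeries τ R) : Prop :=
  ∀ s, MvPowerSeries.constantCoeff (a s) = 0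

lemma coeff_prod_zero [DecidableEq τ] {a : σ → MvPowerSeries τ R} (ha : Z a)
    {d : σ →₀ ℕ} {e : τ →₀ ℕ} (h : degree e < degree d) :
    MvPowerSeries.coeff e (∏ s : σ, a s ^ d s) = 0 :=
  ordGE_prod a ha d e (by rwa [← degree_eq_sum_univ])

/-- the bound used in the definition of `msubst` -/
noncomputable def B (e : τ →₀ ℕ) : σ →₀ ℕ := Finsupp.equivFunOnFinite.symm (fun _ : σ => degree e)

lemma mem_Iic_B {d : σ →₀ ℕ} {e : τ →₀ ℕ} (h : degree d ≤ degree e) :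
    d ∈ Finset.Iic (B (σ := σ) e) := by
  rw [Finset.mem_Iic, Finsupp.le_def]
  intro s
  calc d s ≤ degree d := le_degree s d
  _ ≤ degree e := h

lemma msubst_coeff_eq [DecidableEq τ] {a : σ → MvPowerSeries τ R} (ha : Z a)
    (f : MvPowerSeries σ R) (e : τ →₀ ℕ) (D : Finset (σ →₀ ℕ))
    (hD : ∀ d, degree d ≤ degree e → d ∈ D) :
    MvPowerSeries.coeff e (msubst a f) =
    ∑ d ∈ D, MvPowerSeries.coeff d f * MvPowerSeries.coeff e (∏ s : σ, a s ^ d s) := by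
  classical
  rw [coeff_msubst]
  have key : ∀ (T : Finset (σ →₀ ℕ)), (∀ d, degree d ≤ degree e → d ∈ T) →
      ∑ d ∈ T, MvPowerSeries.coeff d f * MvPowerSeries.coeff e (∏ s : σ, a s ^ d s)
      = ∑ d ∈ T.filter (fun d => degree d ≤ degree e),
        MvPowerSeries.coeff d f * MvPowerSeries.coeff e (∏ s : σ, a s ^ d s) := by
    intro T hT
    refine (Finset.sum_subset (Finset.filter_subset _ _) ?_).symm
    intro d _ hd
    rw [Finset.mem_filter, not_and] at hd
    have : degree e < degree d := by
      by_contra h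
      exact absurd (le_of_not_gt h) (fun hh => by simp_all)
    rw [coeff_prod_zero ha this, mul_zero]
  have h1 := key (Finset.Iic (B (σ := σ) e)) (fun d hd => mem_Iic_B hd)
  have h2 := key D hD
  refine (h1.trans ?_).trans h2.symm
  congr 1
  ext d
  simp only [Finset.mem_filter]
  constructor
  · rintro ⟨_, h⟩; exact ⟨hD d h, h⟩
  · rintro ⟨_, h⟩; exact ⟨mem_Iic_B h, h⟩

/-- msubst only depends on coefficients of degree ≤ degree e -/
lemma msubst_congr [DecidableEq τ] {a : σ → MvPowerSeries τ R} (ha : Z a)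
    {f g : MvPowerSeries σ R} (e : τ →₀ ℕ)
    (h : ∀ d : σ →₀ ℕ, degree d ≤ degree e → MvPowerSeries.coeff d f = MvPowerSeries.coeff d g) :
    MvPowerSeries.coeff e (msubst a f) = MvPowerSeries.coeff e (msubst a g) := by
  classical
  rw [msubst_coeff_eq ha f e ((Finset.Iic (B (σ := σ) e)).filter (fun d => degree d ≤ degree e))
      (fun d hd => Finset.mem_filter.mpr ⟨mem_Iic_B hd, hd⟩),
    msubst_coeff_eq ha g e ((Finset.Iic (B (σ := σ) e)).filter (fun d => degree d ≤ degree e))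
      (fun d hd => Finset.mem_filter.mpr ⟨mem_Iic_B hd, hd⟩)]
  refine Finset.sum_congr rfl fun d hd => ?_
  rw [h d (Finset.mem_filter.mp hd).2]


lemma coeff_aeval [DecidableEq τ] (a : σ → MvPowerSeries τ R) (P : MvPolynomial σ R) (e : τ →₀ ℕ) :
    MvPowerSeries.coeff e (MvPolynomial.aeval a P) =
    ∑ d ∈ P.support, P.coeff d * MvPowerSeries.coeff e (∏ s : σ, a s ^ d s) := by
  rw [MvPolynomial.aeval_def, MvPolynomial.eval₂_eq', map_sum]
  refine Finset.sum_congr rfl fun d _ => ?_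
  have : algebraMap R (MvPowerSeries τ R) (P.coeff d) = MvPowerSeries.C (P.coeff d) := rfl
  rw [this, MvPowerSeries.coeff_C_mul]

/-- key bridge lemma: msubst of (the coercion of) a polynomial is its evaluation. -/
lemma msubst_coe [DecidableEq τ] {a : σ → MvPowerSeries τ R} (ha : Z a) (P : MvPolynomial σ R) :
    msubst a (↑P : MvPowerSeries σ R) = MvPolynomial.aeval a P := by
  classical
  ext e
  rw [coeff_aeval,
    msubst_coeff_eq ha _ e
      (((Finset.Iic (B (σ := σ) e)).filter (fun d => degree d ≤ degree e)) ∪ P.support)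
      (fun d hd => Finset.mem_union_left _ (Finset.mem_filter.mpr ⟨mem_Iic_B hd, hd⟩))]
  rw [Finset.sum_subset (Finset.subset_union_right :
      P.support ⊆ ((Finset.Iic (B (σ := σ) e)).filter (fun d => degree d ≤ degree e)) ∪ P.support)
      (fun d _ hd => by rw [MvPolynomial.notMem_support_iff.mp hd, zero_mul])]
  exact Finset.sum_congr rfl fun d _ => by rw [MvPolynomial.coeff_coe]

lemma msubst_add (a : σ → MvPowerSeries τ R) (f g : MvPowerSeries σ R) :
    msubst a (f + g) = msubst a f + msubst a g := by
  ext e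
  simp only [coeff_msubst, map_add, add_mul, Finset.sum_add_distrib]

lemma msubst_constantCoeff {a : σ → MvPowerSeries τ R} (ha : Z a) (f : MvPowerSeries σ R) :
    MvPowerSeries.constantCoeff (msubst a f) = MvPowerSeries.constantCoeff f := by
  classical
  rw [← MvPowerSeries.coeff_zero_eq_constantCoeff_apply,
    msubst_coeff_eq ha f 0 {0} (fun d hd => by
      rw [map_zero, Nat.le_zero, degree_eq_zero_iff] at hd
      simp [hd])]
  rw [Finset.sum_singleton]
  have : (∏ s : σ, a s ^ (0 : σ →₀ ℕ) s) = 1 := by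
    simp
  rw [this, ← MvPowerSeries.coeff_zero_eq_constantCoeff_apply]
  simp [MvPowerSeries.coeff_one]


/-- total-degree truncation of a power series, as a polynomial -/
noncomputable def truncW (N : ℕ) (f : MvPowerSeries σ R) : MvPolynomial σ R :=
  ∑ d ∈ (Finset.Iic (Finsupp.equivFunOnFinite.symm (fun _ : σ => N))).filter
      (fun d => degree d ≤ N),
    MvPolynomial.monomial d (MvPowerSeries.coeff d f)

lemma coeff_truncW (N : ℕ) (f : MvPowerSeries σ R) (d : σ →₀ ℕ) :
    (truncW N f).coeff d = if degree d ≤ N then MvPowerSeries.coeff d f else 0 := by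
  classical
  rw [truncW, MvPolynomial.coeff_sum]
  simp only [MvPolynomial.coeff_monomial]
  rw [Finset.sum_ite_eq']
  congr 1
  simp only [Finset.mem_filter, Finset.mem_Iic, eq_iff_iff]
  constructor
  · rintro ⟨_, h⟩; exact h
  · intro h
    refine ⟨?_, h⟩
    rw [Finsupp.le_def]
    intro s
    simp only [Finsupp.equivFunOnFinite_symm_apply_apply]
    exact le_trans (le_degree s d) h

lemma coe_coeff_truncW (N : ℕ) (f : MvPowerSeries σ R) (d : σ →₀ ℕ) (h : degree d ≤ N) :
    MvPowerSeries.coeff d ((truncW N f : MvPolynomial σ R) : MvPowerSeries σ R)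
      = MvPowerSeries.coeff d f := by
  rw [MvPolynomial.coeff_coe, coeff_truncW, if_pos h]


lemma msubst_C [DecidableEq τ] {a : σ → MvPowerSeries τ R} (ha : Z a) (r : R) :
    msubst a (MvPowerSeries.C r) = MvPowerSeries.C r := by
  rw [← MvPolynomial.coe_C, msubst_coe ha, MvPolynomial.aeval_C]
  rfl

lemma msubst_one [DecidableEq τ] {a : σ → MvPowerSeries τ R} (ha : Z a) :
    msubst a 1 = 1 := by
  have := msubst_C ha 1
  rwa [map_one, map_one] at this

lemma msubst_X [DecidableEq τ] {a : σ → MvPowerSeries τ R} (ha : Z a) (s : σ) :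
    msubst a (MvPowerSeries.X s) = a s := by
  rw [← MvPolynomial.coe_X, msubst_coe ha, MvPolynomial.aeval_X]

lemma msubst_mul [DecidableEq τ] {a : σ → MvPowerSeries τ R} (ha : Z a)
    (f g : MvPowerSeries σ R) :
    msubst a (f * g) = msubst a f * msubst a g := by
  classical
  ext e
  set N := degree e with hN
  -- step 1: replace f*g by the product of truncations
  have step1 : MvPowerSeries.coeff e (msubst a (f * g)) =
      MvPowerSeries.coeff e (msubst a ((truncW N f * truncW N g : MvPolynomial σ R) :
        MvPowerSeries σ R)) := by
    refine msubst_congr ha e fun d hd => ?_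
    rw [MvPolynomial.coe_mul, MvPowerSeries.coeff_mul, MvPowerSeries.coeff_mul]
    refine Finset.sum_congr rfl fun p hp => ?_
    rw [Finset.HasAntidiagonal.mem_antidiagonal] at hp
    have h1 : degree p.1 ≤ N := by
      have := degree_add p.1 p.2
      rw [hp] at this
      omega
    have h2 : degree p.2 ≤ N := by
      have := degree_add p.1 p.2
      rw [hp] at this
      omega
    rw [coe_coeff_truncW _ _ _ h1, coe_coeff_truncW _ _ _ h2]
  -- step 2: msubst of polynomial product = product of msubsts of polynomials
  have step2 : msubst a ((truncW N f * truncW N g : MvPolynomial σ R) : MvPowerSeries σ R) =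
      msubst a ((truncW N f : MvPolynomial σ R) : MvPowerSeries σ R) *
        msubst a ((truncW N g : MvPolynomial σ R) : MvPowerSeries σ R) := by
    rw [msubst_coe ha, msubst_coe ha, msubst_coe ha, map_mul]
  -- step 3: back to f and g
  have step3 : MvPowerSeries.coeff e
      (msubst a ((truncW N f : MvPolynomial σ R) : MvPowerSeries σ R) *
        msubst a ((truncW N g : MvPolynomial σ R) : MvPowerSeries σ R)) =
      MvPowerSeries.coeff e (msubst a f * msubst a g) := by
    rw [MvPowerSeries.coeff_mul, MvPowerSeries.coeff_mul]
    refine Finset.sum_congr rfl fun p hp => ?_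
    rw [Finset.HasAntidiagonal.mem_antidiagonal] at hp
    have h1 : degree p.1 ≤ N := by
      have := degree_add p.1 p.2; rw [hp] at this; omega
    have h2 : degree p.2 ≤ N := by
      have := degree_add p.1 p.2; rw [hp] at this; omega
    congr 1
    · exact msubst_congr ha p.1 fun d hd => coe_coeff_truncW _ _ _ (le_trans hd h1)
    · exact msubst_congr ha p.2 fun d hd => coe_coeff_truncW _ _ _ (le_trans hd h2)
  rw [step1, step2, step3]

variable {υ : Type*}

lemma msubst_aeval [Fintype τ] [DecidableEq τ] [DecidableEq υ]
    {a : σ → MvPowerSeries τ R} {b : τ → MvPowerSeries υ R} (hb : Z b)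
    (P : MvPolynomial σ R) :
    msubst b (MvPolynomial.aeval a P) = MvPolynomial.aeval (fun s => msubst b (a s)) P := by
  induction P using MvPolynomial.induction_on with
  | C r =>
    rw [MvPolynomial.aeval_C, MvPolynomial.aeval_C]
    exact msubst_C hb _
  | add p q hp hq =>
    rw [map_add, map_add, msubst_add, hp, hq]
  | mul_X p s hp =>
    rw [map_mul, map_mul, msubst_mul hb, hp, MvPolynomial.aeval_X, MvPolynomial.aeval_X]

/-- composition law for msubst -/
lemma msubst_comp [Fintype τ] [DecidableEq τ] [DecidableEq υ]
    {a : σ → MvPowerSeries τ R} {b : τ → MvPowerSeries υ R}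
    (ha : Z a) (hb : Z b) (f : MvPowerSeries σ R) :
    msubst b (msubst a f) = msubst (fun s => msubst b (a s)) f := by
  classical
  have hc : Z (fun s => msubst b (a s)) := fun s => by
    rw [msubst_constantCoeff hb]; exact ha s
  ext e
  set N := degree e with hN
  have step1 : MvPowerSeries.coeff e (msubst b (msubst a f)) =
      MvPowerSeries.coeff e (msubst b (msubst a ((truncW N f : MvPolynomial σ R) :
        MvPowerSeries σ R))) := by
    refine msubst_congr hb e fun d hd => ?_
    exact msubst_congr ha d fun d' hd' =>
      (coe_coeff_truncW _ _ _ (le_trans hd' (le_trans hd le_rfl))).symm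
  have step2 : msubst b (msubst a ((truncW N f : MvPolynomial σ R) : MvPowerSeries σ R)) =
      msubst (fun s => msubst b (a s)) ((truncW N f : MvPolynomial σ R) : MvPowerSeries σ R) := by
    rw [msubst_coe ha, msubst_aeval hb, msubst_coe hc]
  have step3 : MvPowerSeries.coeff e
      (msubst (fun s => msubst b (a s)) ((truncW N f : MvPolynomial σ R) : MvPowerSeries σ R)) =
      MvPowerSeries.coeff e (msubst (fun s => msubst b (a s)) f) :=
    msubst_congr hc e fun d hd => coe_coeff_truncW _ _ _ hd
  rw [step1, step2, step3]

end MAux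

variable {R : Type*} [CommRing R]

/-- `plugPair F G H = F(G, H)`. -/
noncomputable def plugPair {d : ℕ} {σ : Type*} (F : Fin d → MvPowerSeries (Fin d ⊕ Fin d) R)
    (G H : Fin d → MvPowerSeries σ R) : Fin d → MvPowerSeries σ R :=
  fun l => msubst (Sum.elim G H) (F l)

/-- composition of tuples of power series: `fcomp g h = g ∘ h`. -/
noncomputable def fcomp {d e f : ℕ} (g : Fin f → MvPowerSeries (Fin e) R)
    (h : Fin e → MvPowerSeries (Fin d) R) : Fin f → MvPowerSeries (Fin d) R :=
  fun l => msubst h (g l)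

/-- the identity tuple `X`. -/
noncomputable def fid (d : ℕ) : Fin d → MvPowerSeries (Fin d) R := fun l => MvPowerSeries.X l

/-- `F` is a `d`-dimensional formal group law over `R`. -/
noncomputable def IsFGL {d : ℕ} (F : Fin d → MvPowerSeries (Fin d ⊕ Fin d) R) : Prop :=
  (∀ l, MvPowerSeries.constantCoeff (F l) = 0) ∧
  -- F(X, 0) = X
  plugPair F (fid d) 0 = fid d ∧
  -- F(X, Y) = F(Y, X)
  plugPair F (fun i => MvPowerSeries.X (Sum.inr i)) (fun i => MvPowerSeries.X (Sum.inl i)) = F ∧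
  -- F(X, F(Y, Z)) = F(F(X, Y), Z)
  plugPair F (fun i => MvPowerSeries.X (Sum.inl i))
      (plugPair F (fun i => MvPowerSeries.X (Sum.inr (Sum.inl i)))
        (fun i => MvPowerSeries.X (Sum.inr (Sum.inr i)))) =
    plugPair F
      (plugPair F (fun i => MvPowerSeries.X (Sum.inl i))
        (fun i => (MvPowerSeries.X (Sum.inr (Sum.inl i)) :
          MvPowerSeries (Fin d ⊕ (Fin d ⊕ Fin d)) R)))
      (fun i => MvPowerSeries.X (Sum.inr (Sum.inr i)))

/-- `f` is a homomorphism from the `d`-dimensional formal group law `F` to the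
`e`-dimensional formal group law `F'`:  `f(F(X,Y)) = F'(f(X), f(Y))`. -/
noncomputable def IsFGLHom {d e : ℕ} (F : Fin d → MvPowerSeries (Fin d ⊕ Fin d) R)
    (F' : Fin e → MvPowerSeries (Fin e ⊕ Fin e) R)
    (f : Fin e → MvPowerSeries (Fin d) R) : Prop :=
  (∀ l, MvPowerSeries.constantCoeff (f l) = 0) ∧
  (fun l => msubst F (f l)) =
    plugPair F' (fun l => msubst (fun i => MvPowerSeries.X (Sum.inl i)) (f l))
      (fun l => msubst (fun i => MvPowerSeries.X (Sum.inr i)) (f l))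

/-- an action of the group `G` on the formal group law `Φ` by automorphisms. -/
noncomputable def IsFGLAction {d : ℕ} (Φ : Fin d → MvPowerSeries (Fin d ⊕ Fin d) R)
    {G : Type*} [Group G] (ρ : G → (Fin d → MvPowerSeries (Fin d) R)) : Prop :=
  (∀ σ : G, IsFGLHom Φ Φ (ρ σ)) ∧ ρ 1 = fid d ∧
  ∀ σ τ : G, ρ (σ * τ) = fcomp (ρ σ) (ρ τ)

/-- `(F, f)` is a fixed pair for `(Φ, ρ)`. -/
noncomputable def IsFixedPair {d e : ℕ} (Φ : Fin d → MvPowerSeries (Fin d ⊕ Fin d) R)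
    {G : Type*} (ρ : G → (Fin d → MvPowerSeries (Fin d) R))
    (F : Fin e → MvPowerSeries (Fin e ⊕ Fin e) R)
    (f : Fin d → MvPowerSeries (Fin e) R) : Prop :=
  IsFGL F ∧ IsFGLHom F Φ f ∧ ∀ σ : G, fcomp (ρ σ) f = f

/-- `(F, f)` is a universal fixed pair for `(Φ, ρ)`. -/
noncomputable def IsUniversalFixedPair {d e : ℕ}
    (Φ : Fin d → MvPowerSeries (Fin d ⊕ Fin d) R)
    {G : Type*} (ρ : G → (Fin d → MvPowerSeries (Fin d) R))
    (F : Fin e → MvPowerSeries (Fin e ⊕ Fin e) R)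
    (f : Fin d → MvPowerSeries (Fin e) R) : Prop :=
  IsFixedPair Φ ρ F f ∧
  ∀ (e' : ℕ) (F' : Fin e' → MvPowerSeries (Fin e' ⊕ Fin e') R)
    (f' : Fin d → MvPowerSeries (Fin e') R),
    IsFixedPair Φ ρ F' f' →
    ∃! g : Fin e → MvPowerSeries (Fin e') R, IsFGLHom F' F g ∧ fcomp f g = f'


section FGLLayer
open MAux
variable {R : Type*} [CommRing R]

lemma Z_fid {d : ℕ} : MAux.Z (fid d : Fin d → MvPowerSeries (Fin d) R) :=
  fun l => MvPowerSeries.constantCoeff_X l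

lemma Z_elim {d : ℕ} {σ : Type*} {G H : Fin d → MvPowerSeries σ R}
    (hG : MAux.Z G) (hH : MAux.Z H) : MAux.Z (Sum.elim G H) := by
  rintro (i | i)
  · exact hG i
  · exact hH i

lemma Z_fcomp {d e f : ℕ} {g : Fin f → MvPowerSeries (Fin e) R}
    {h : Fin e → MvPowerSeries (Fin d) R} (hg : MAux.Z g) (hh : MAux.Z h) :
    MAux.Z (fcomp g h) := fun l => by
  rw [fcomp, msubst_constantCoeff hh]; exact hg l

lemma fcomp_assoc {d e f g : ℕ} (a : Fin g → MvPowerSeries (Fin f) R)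
    {b : Fin f → MvPowerSeries (Fin e) R} {c : Fin e → MvPowerSeries (Fin d) R}
    (hb : MAux.Z b) (hc : MAux.Z c) :
    fcomp (fcomp a b) c = fcomp a (fcomp b c) := by
  funext l
  show msubst c (msubst b (a l)) = msubst (fcomp b c) (a l)
  rw [msubst_comp hb hc]
  rfl

lemma hom_comp {d e e' : ℕ} {F : Fin d → MvPowerSeries (Fin d ⊕ Fin d) R}
    {F' : Fin e → MvPowerSeries (Fin e ⊕ Fin e) R}
    {F'' : Fin e' → MvPowerSeries (Fin e' ⊕ Fin e') R}
    {f : Fin e → MvPowerSeries (Fin d) R} {g : Fin e' → MvPowerSeries (Fin e) R}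
    (hZF : MAux.Z F) (hZF' : MAux.Z F')
    (hf : IsFGLHom F F' f) (hg : IsFGLHom F' F'' g) :
    IsFGLHom F F'' (fcomp g f) := by
  obtain ⟨hf0, hf2⟩ := hf
  obtain ⟨hg0, hg2⟩ := hg
  have hZf : MAux.Z f := hf0
  have hZg : MAux.Z g := hg0
  set XL : Fin d → MvPowerSeries (Fin d ⊕ Fin d) R := fun i => MvPowerSeries.X (Sum.inl i)
    with hXL
  set XR : Fin d → MvPowerSeries (Fin d ⊕ Fin d) R := fun i => MvPowerSeries.X (Sum.inr i)
    with hXR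
  set YL : Fin e → MvPowerSeries (Fin e ⊕ Fin e) R := fun i => MvPowerSeries.X (Sum.inl i)
    with hYL
  set YR : Fin e → MvPowerSeries (Fin e ⊕ Fin e) R := fun i => MvPowerSeries.X (Sum.inr i)
    with hYR
  have ZXL : MAux.Z XL := fun i => MvPowerSeries.constantCoeff_X _
  have ZXR : MAux.Z XR := fun i => MvPowerSeries.constantCoeff_X _
  have ZYL : MAux.Z YL := fun i => MvPowerSeries.constantCoeff_X _
  have ZYR : MAux.Z YR := fun i => MvPowerSeries.constantCoeff_X _
  set fL : Fin e → MvPowerSeries (Fin d ⊕ Fin d) R := fun l => msubst XL (f l) with hfL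
  set fR : Fin e → MvPowerSeries (Fin d ⊕ Fin d) R := fun l => msubst XR (f l) with hfR
  set gL : Fin e' → MvPowerSeries (Fin e ⊕ Fin e) R := fun l => msubst YL (g l) with hgL
  set gR : Fin e' → MvPowerSeries (Fin e ⊕ Fin e) R := fun l => msubst YR (g l) with hgR
  have ZfL : MAux.Z fL := fun l => by rw [hfL, msubst_constantCoeff ZXL]; exact hf0 l
  have ZfR : MAux.Z fR := fun l => by rw [hfR, msubst_constantCoeff ZXR]; exact hf0 l
  have ZgL : MAux.Z gL := fun l => by rw [hgL, msubst_constantCoeff ZYL]; exact hg0 l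
  have ZgR : MAux.Z gR := fun l => by rw [hgR, msubst_constantCoeff ZYR]; exact hg0 l
  have Zef : MAux.Z (Sum.elim fL fR) := Z_elim ZfL ZfR
  have Zeg : MAux.Z (Sum.elim gL gR) := Z_elim ZgL ZgR
  have hf2' : ∀ i, msubst F (f i) = msubst (Sum.elim fL fR) (F' i) := fun i => congrFun hf2 i
  have hg2' : ∀ i, msubst F' (g i) = msubst (Sum.elim gL gR) (F'' i) := fun i => congrFun hg2 i
  constructor
  · intro l
    show MvPowerSeries.constantCoeff (msubst f (g l)) = 0
    rw [msubst_constantCoeff hZf]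
    exact hg0 l
  · funext l
    show msubst F (msubst f (g l)) = msubst (Sum.elim
      (fun l => msubst XL (msubst f (g l))) (fun l => msubst XR (msubst f (g l)))) (F'' l)
    calc msubst F (msubst f (g l))
        = msubst (fun i => msubst F (f i)) (g l) := msubst_comp hZf hZF (g l)
      _ = msubst (fun i => msubst (Sum.elim fL fR) (F' i)) (g l) := by
          exact congrArg (fun a => msubst a (g l)) (funext hf2')
      _ = msubst (Sum.elim fL fR) (msubst F' (g l)) := (msubst_comp hZF' Zef (g l)).symm
      _ = msubst (Sum.elim fL fR) (msubst (Sum.elim gL gR) (F'' l)) := by rw [hg2' l]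
      _ = msubst (fun i => msubst (Sum.elim fL fR) (Sum.elim gL gR i)) (F'' l) :=
          msubst_comp Zeg Zef (F'' l)
      _ = msubst (Sum.elim
            (fun l => msubst XL (msubst f (g l))) (fun l => msubst XR (msubst f (g l)))) (F'' l) := by
          refine congrArg (fun a => msubst a (F'' l)) (funext fun i => ?_)
          rcases i with j | j
          · show msubst (Sum.elim fL fR) (msubst YL (g j)) = msubst XL (msubst f (g j))
            rw [msubst_comp ZYL Zef (g j), msubst_comp hZf ZXL (g j)]
            refine congrArg (fun a => msubst a (g j)) (funext fun k => ?_)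
            rw [hYL]
            rw [msubst_X Zef (Sum.inl k)]
            rfl
          · show msubst (Sum.elim fL fR) (msubst YR (g j)) = msubst XR (msubst f (g j))
            rw [msubst_comp ZYR Zef (g j), msubst_comp hZf ZXR (g j)]
            refine congrArg (fun a => msubst a (g j)) (funext fun k => ?_)
            rw [hYR]
            rw [msubst_X Zef (Sum.inr k)]
            rfl

end FGLLayer

/-- Proposition `ufix_prod`.  If `G = G₁ × G₂` acts on `Φ`, `(F₁, f₁)` is a
universal fixed pair for `(Φ, G₁)`, `G₂` acts on `F₁` via the induced action, and
`(F₂, f₂)` is a universal fixed pair for `(F₁, G₂)`, then `(F₂, f₁∘f₂)` is a universal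
fixed pair for `(Φ, G)`. -/
theorem ufix_prod {A : Type*} [CommRing A] {G₁ G₂ : Type*} [Group G₁] [Group G₂]
    (d e₁ e₂ : ℕ)
    (Φ : Fin d → MvPowerSeries (Fin d ⊕ Fin d) A) (hΦ : IsFGL Φ)
    (ρ : G₁ × G₂ → (Fin d → MvPowerSeries (Fin d) A)) (hρ : IsFGLAction Φ ρ)
    (F₁ : Fin e₁ → MvPowerSeries (Fin e₁ ⊕ Fin e₁) A)
    (f₁ : Fin d → MvPowerSeries (Fin e₁) A)
    (hFf₁ : IsUniversalFixedPair Φ (fun σ₁ : G₁ => ρ (σ₁, 1)) F₁ f₁)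
    -- the induced action of G₂ on F₁: f₁ ∘ σ'₂ = σ₂ ∘ f₁
    (ρ₂' : G₂ → (Fin e₁ → MvPowerSeries (Fin e₁) A))
    (hρ₂' : ∀ σ₂ : G₂, IsFGLHom F₁ F₁ (ρ₂' σ₂) ∧
      fcomp f₁ (ρ₂' σ₂) = fcomp (ρ (1, σ₂)) f₁)
    (F₂ : Fin e₂ → MvPowerSeries (Fin e₂ ⊕ Fin e₂) A)
    (f₂ : Fin e₁ → MvPowerSeries (Fin e₂) A)
    (hFf₂ : IsUniversalFixedPair F₁ ρ₂' F₂ f₂) :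
    IsUniversalFixedPair Φ ρ F₂ (fcomp f₁ f₂) := by
  classical
  have hρhom := hρ.1
  have hρmul := hρ.2.2
  have hF₁fgl : IsFGL F₁ := hFf₁.1.1
  have hf₁hom : IsFGLHom F₁ Φ f₁ := hFf₁.1.2.1
  have hf₁fix := hFf₁.1.2.2
  have hf₁univ := hFf₁.2
  have hF₂fgl : IsFGL F₂ := hFf₂.1.1
  have hf₂hom : IsFGLHom F₂ F₁ f₂ := hFf₂.1.2.1
  have hf₂fix := hFf₂.1.2.2
  have hf₂univ := hFf₂.2
  have ZΦ : MAux.Z Φ := hΦ.1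
  have ZF₁ : MAux.Z F₁ := hF₁fgl.1
  have ZF₂ : MAux.Z F₂ := hF₂fgl.1
  have Zf₁ : MAux.Z f₁ := hf₁hom.1
  have Zf₂ : MAux.Z f₂ := hf₂hom.1
  have Zρ : ∀ σ : G₁ × G₂, MAux.Z (ρ σ) := fun σ => (hρhom σ).1
  have Zρ₂' : ∀ σ₂ : G₂, MAux.Z (ρ₂' σ₂) := fun σ₂ => ((hρ₂' σ₂).1).1
  refine ⟨⟨hF₂fgl, hom_comp ZF₂ ZF₁ hf₂hom hf₁hom, ?_⟩, ?_⟩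
  · -- fixedness
    rintro ⟨σ₁, σ₂⟩
    have hsplit : ρ (σ₁, σ₂) = fcomp (ρ (σ₁, 1)) (ρ (1, σ₂)) := by
      rw [← hρmul]
      simp [Prod.ext_iff]
    calc fcomp (ρ (σ₁, σ₂)) (fcomp f₁ f₂)
        = fcomp (fcomp (ρ (σ₁, 1)) (ρ (1, σ₂))) (fcomp f₁ f₂) := by rw [hsplit]
      _ = fcomp (ρ (σ₁, 1)) (fcomp (ρ (1, σ₂)) (fcomp f₁ f₂)) :=
          fcomp_assoc _ (Zρ _) (Z_fcomp Zf₁ Zf₂)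
      _ = fcomp (ρ (σ₁, 1)) (fcomp (fcomp (ρ (1, σ₂)) f₁) f₂) := by
          rw [fcomp_assoc _ Zf₁ Zf₂]
      _ = fcomp (ρ (σ₁, 1)) (fcomp (fcomp f₁ (ρ₂' σ₂)) f₂) := by rw [(hρ₂' σ₂).2]
      _ = fcomp (ρ (σ₁, 1)) (fcomp f₁ (fcomp (ρ₂' σ₂) f₂)) := by
          rw [fcomp_assoc _ (Zρ₂' σ₂) Zf₂]
      _ = fcomp (ρ (σ₁, 1)) (fcomp f₁ f₂) := by rw [hf₂fix σ₂]
      _ = fcomp (fcomp (ρ (σ₁, 1)) f₁) f₂ := (fcomp_assoc _ Zf₁ Zf₂).symm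
      _ = fcomp f₁ f₂ := by rw [hf₁fix σ₁]
  · -- universality
    intro e' F' f' hfix'
    obtain ⟨hF'fgl, hf'hom, hf'fix⟩ := hfix'
    have ZF' : MAux.Z F' := hF'fgl.1
    obtain ⟨g, ⟨hghom, hgcomp⟩, hguniq⟩ := hf₁univ e' F' f'
      ⟨hF'fgl, hf'hom, fun σ₁ => hf'fix (σ₁, 1)⟩
    have Zg : MAux.Z g := hghom.1
    have gfix : ∀ σ₂ : G₂, fcomp (ρ₂' σ₂) g = g := by
      intro σ₂
      apply hguniq
      refine ⟨hom_comp ZF' ZF₁ hghom (hρ₂' σ₂).1, ?_⟩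
      calc fcomp f₁ (fcomp (ρ₂' σ₂) g)
          = fcomp (fcomp f₁ (ρ₂' σ₂)) g := (fcomp_assoc _ (Zρ₂' σ₂) Zg).symm
        _ = fcomp (fcomp (ρ (1, σ₂)) f₁) g := by rw [(hρ₂' σ₂).2]
        _ = fcomp (ρ (1, σ₂)) (fcomp f₁ g) := fcomp_assoc _ Zf₁ Zg
        _ = fcomp (ρ (1, σ₂)) f' := by rw [hgcomp]
        _ = f' := hf'fix (1, σ₂)
    obtain ⟨g₂, ⟨hg₂hom, hg₂comp⟩, hg₂uniq⟩ := hf₂univ e' F' g ⟨hF'fgl, hghom, gfix⟩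
    refine ⟨g₂, ⟨hg₂hom, ?_⟩, ?_⟩
    · calc fcomp (fcomp f₁ f₂) g₂
          = fcomp f₁ (fcomp f₂ g₂) := fcomp_assoc _ Zf₂ hg₂hom.1
        _ = fcomp f₁ g := by rw [hg₂comp]
        _ = f' := hgcomp
    · rintro g₂' ⟨hg₂'hom, hg₂'comp⟩
      have h1 : fcomp f₂ g₂' = g := by
        apply hguniq
        refine ⟨hom_comp ZF' ZF₂ hg₂'hom hf₂hom, ?_⟩
        rw [← fcomp_assoc _ Zf₂ hg₂'hom.1]
        exact hg₂'comp
      exact hg₂uniq g₂' ⟨hg₂'hom, h1⟩
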